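/- Let ξ be a random variable with ξ > 0 a.s., E[ξ] = 1, E[ξ|ln ξ|] < +∞ and E[ξ|ln Z|] < +∞, and set W^r = w^r − (1/γ^r)ln ξ + (1/γ^r)E[ξ ln ξ] and W^g = w^g − (1/γ^g)ln(ξ/Z) + (1/γ^g)E[ξ ln(ξ/Z)]. Then there exists a constant c ∈ ℝ with W^r + W^g = X + c almost surely if and only if ξ = exp(ρ ln Z − γ*X) / E[exp(ρ ln Z − γ*X)] almost surely. -/
import Mathlib


open MeasureTheory Real

noncomputable section

lemma key_iff (a b wr wg A B : ℝ) (hab : a + b ≠ 0) (L M X c : ℝ) :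
    (wr - a*L + a*A) + (wg - b*(L - M) + b*B) = X + c ↔
    L = (b/(a+b))*M - (1/(a+b))*X + (1/(a+b))*((wr + wg + a*A + b*B) - c) := by
  constructor <;> intro h
  · field_simp
    linear_combination -h
  · field_simp at h
    refine mul_left_cancel₀ hab ?_
    linear_combination (-(a+b))*h

/-- market clearing characterization. With
`W^r = w^r − (1/γ^r)ln ξ + (1/γ^r)E[ξ ln ξ]` and
`W^g = w^g − (1/γ^g)ln(ξ/Z) + (1/γ^g)E[ξ ln(ξ/Z)]`, there is a constant `c` with
`W^r + W^g = X + c` a.s. iff `ξ = exp(ρ ln Z − γ*X)/E[exp(ρ ln Z − γ*X)]` a.s. -/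
theorem stmt3 {Ω : Type*} [MeasurableSpace Ω] (μ : Measure Ω) [IsProbabilityMeasure μ]
    (γr γg wr wg γs ρ : ℝ) (hγr : 0 < γr) (hγg : 0 < γg)
    (hγs : 1 / γs = 1 / γr + 1 / γg) (hρ : ρ = γr / (γr + γg))
    (Z : Ω → ℝ) (hZmeas : Measurable Z) (hZpos : ∀ᵐ ω ∂μ, 0 < Z ω)
    (hZint : Integrable Z μ) (hZ1 : ∫ ω, Z ω ∂μ = 1)
    (X : Ω → ℝ) (hXmeas : Measurable X)
    (hexpint : Integrable (fun ω => Real.exp (ρ * Real.log (Z ω) - γs * X ω)) μ)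
    (ξ : Ω → ℝ) (hξmeas : Measurable ξ) (hξpos : ∀ᵐ ω ∂μ, 0 < ξ ω)
    (hξint : Integrable ξ μ) (hξ1 : ∫ ω, ξ ω ∂μ = 1)
    (hξlnξ : Integrable (fun ω => ξ ω * |Real.log (ξ ω)|) μ)
    (hξlnZ : Integrable (fun ω => ξ ω * |Real.log (Z ω)|) μ)
    (hξX : Integrable (fun ω => ξ ω * |X ω|) μ) :
    (∃ c : ℝ, ∀ᵐ ω ∂μ,
        (wr - (1 / γr) * Real.log (ξ ω) + (1 / γr) * ∫ ω', ξ ω' * Real.log (ξ ω') ∂μ) +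
        (wg - (1 / γg) * Real.log (ξ ω / Z ω)
            + (1 / γg) * ∫ ω', ξ ω' * Real.log (ξ ω' / Z ω') ∂μ)
          = X ω + c) ↔
      ξ =ᵐ[μ] fun ω => Real.exp (ρ * Real.log (Z ω) - γs * X ω) /
        ∫ ω', Real.exp (ρ * Real.log (Z ω') - γs * X ω') ∂μ := by
  have hγr0 : γr ≠ 0 := ne_of_gt hγr
  have hγg0 : γg ≠ 0 := ne_of_gt hγg
  have hγspos : 0 < γs := by
    have h1 : 0 < 1/γs := by rw [hγs]; positivity
    exact one_div_pos.mp h1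
  have hγs0 : γs ≠ 0 := ne_of_gt hγspos
  have hsum0 : γr + γg ≠ 0 := by positivity
  have hab : (1/γr) + (1/γg) ≠ 0 := by positivity
  have hinv : 1/((1/γr)+(1/γg)) = γs := by rw [← hγs, one_div_one_div]
  have hP : γs * (γr + γg) = γr * γg := by
    field_simp at hγs
    linarith
  have hrho : (1/γg)/((1/γr)+(1/γg)) = ρ := by
    rw [← hγs, hρ]
    rw [div_eq_div_iff (by positivity : (1:ℝ)/γs ≠ 0) hsum0, hγs]
    field_simp
    ring
  have hone : γs * ((1/γr)+(1/γg)) = 1 := by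
    rw [← hγs]
    field_simp
  set A := ∫ ω', ξ ω' * Real.log (ξ ω') ∂μ with hA
  set B := ∫ ω', ξ ω' * Real.log (ξ ω' / Z ω') ∂μ with hB
  set I := ∫ ω', Real.exp (ρ * Real.log (Z ω') - γs * X ω') ∂μ with hI
  have hIpos : 0 < I := integral_exp_pos hexpint
  constructor
  · rintro ⟨c, hc⟩
    have hae : ξ =ᵐ[μ] fun ω => Real.exp (ρ * Real.log (Z ω) - γs * X ω) *
        Real.exp (γs * ((wr + wg + (1/γr)*A + (1/γg)*B) - c)) := by
      filter_upwards [hc, hξpos, hZpos] with ω heq hξω hZω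
      rw [Real.log_div (ne_of_gt hξω) (ne_of_gt hZω)] at heq
      have hL := (key_iff (1/γr) (1/γg) wr wg A B hab (Real.log (ξ ω))
        (Real.log (Z ω)) (X ω) c).mp heq
      rw [hinv, hrho] at hL
      rw [← Real.exp_log hξω, hL, ← Real.exp_add]
    have h1 : I * Real.exp (γs * ((wr + wg + (1/γr)*A + (1/γg)*B) - c)) = 1 := by
      have h2 : ∫ ω, ξ ω ∂μ = (∫ ω, Real.exp (ρ * Real.log (Z ω) - γs * X ω) ∂μ) *
          Real.exp (γs * ((wr + wg + (1/γr)*A + (1/γg)*B) - c)) := by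
        rw [integral_congr_ae hae, integral_mul_const]
      rw [hξ1] at h2
      rw [hI]
      exact h2.symm
    have hE : Real.exp (γs * ((wr + wg + (1/γr)*A + (1/γg)*B) - c)) = 1/I := by
      rw [eq_div_iff (ne_of_gt hIpos)]
      linarith
    filter_upwards [hae] with ω h
    rw [h, hE]
    ring
  · intro hae
    refine ⟨wr + wg + (1/γr)*A + (1/γg)*B + ((1/γr)+(1/γg))*Real.log I, ?_⟩
    filter_upwards [hae, hξpos, hZpos] with ω h hξω hZω
    rw [Real.log_div (ne_of_gt hξω) (ne_of_gt hZω)]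
    refine (key_iff (1/γr) (1/γg) wr wg A B hab _ _ _ _).mpr ?_
    rw [hinv, hrho]
    have hL : Real.log (ξ ω) = ρ * Real.log (Z ω) - γs * X ω - Real.log I := by
      rw [h, Real.log_div (Real.exp_ne_zero _) (ne_of_gt hIpos), Real.log_exp]
    rw [hL]
    linear_combination (Real.log I) * hone
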